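/- Let M denote the real inner product space of n×n real matrices with the Frobenius inner product. Let g be an invertible n×n real matrix, and let Ad_g : M → M be the continuous linear map X ↦ gXg⁻¹, with Hilbert adjoint Ad_g†. Let P : M → M and C : M → ℝ^m and R : ℝ^m → ℝ^m be continuous linear maps, and suppose T := C ∘ P ∘ C† + R is invertible as a linear map on ℝ^m. Define K := P ∘ C† ∘ T⁻¹, and, for a fixed vector e ∈ ℝ^m, ζ := K(e) ∈ M. Define the barred quantities P̄ := Ad_g ∘ P ∘ Ad_g†, C̄ := C ∘ Ad_{g⁻¹}, T̄ := C̄ ∘ P̄ ∘ C̄† + R, K̄ := P̄ ∘ C̄† ∘ T̄⁻¹, and ζ̄ := K̄(e). Then: (i) T̄ = T (in particular T̄ is invertible); (ii) K̄ = Ad_g ∘ K, so ζ̄ = g ζ g⁻¹; (iii) g·exp(ζ) = exp(ζ̄)·g; and (iv) Ad_{g·exp(ζ)} ∘ (J_ζ ∘ (id − K∘C) ∘ P ∘ J_ζ†) ∘ Ad_{g·exp(ζ)}† = J̄_{ζ̄} ∘ (id − K̄∘C̄) ∘ P̄ ∘ J̄_{ζ̄}†, where J_ζ : M → M is the map X ↦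 ∫₀¹ exp(−sζ) X exp(sζ) ds and J̄_μ := J_{−μ}. -/

import Mathlib

/-!
STATEMENT 14: Measurement-update half of Theorem 1 (equivalence of left- and right-invariant
LEKF updates).  M is the space of n×n real matrices with the Frobenius inner product
⟪A, B⟫ = trace(Aᵀ B); ℝ^m carries the Euclidean inner product.  Hilbert adjoints (with
respect to these inner products) are given as data, each characterized by its defining
property ⟪T x, y⟫ = ⟪x, T† y⟫.  The inverse of an invertible operator T on ℝ^m is
`Ring.inverse T` in the endomorphism ring.
-/

open scoped Matrix

attribute [local instance] Matrix.frobeniusNormedAddCommGroup Matrix.frobeniusNormedSpace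

/-- The matrix exponential on `n × n` real matrices. -/
noncomputable def mexp {n : Type*} [Fintype n] [DecidableEq n] (A : Matrix n n ℝ) :
    Matrix n n ℝ :=
  NormedSpace.exp A

/-- The Frobenius inner product on `n × n` real matrices. -/
def frobInner {n : Type*} [Fintype n] (A B : Matrix n n ℝ) : ℝ :=
  (Aᵀ * B).trace

/-- The Euclidean inner product on `ℝ^m`. -/
def eInner {m : ℕ} (x y : Fin m → ℝ) : ℝ :=
  ∑ i, x i * y i

/-- The adjoint action `Ad_g : X ↦ g X g⁻¹` as a linear map on `n × n` real matrices. -/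
noncomputable def AdL {n : Type*} [Fintype n] [DecidableEq n] (g : Matrix n n ℝ) :
    Matrix n n ℝ →ₗ[ℝ] Matrix n n ℝ where
  toFun X := g * X * g⁻¹
  map_add' X Y := by simp [Matrix.add_mul, Matrix.mul_add]
  map_smul' c X := by simp [Matrix.smul_mul, Matrix.mul_smul]

/-- The right group Jacobian `J_ζ : X ↦ ∫₀¹ exp(−sζ) X exp(sζ) ds`. -/
noncomputable def Jfun {n : Type*} [Fintype n] [DecidableEq n] (ζ X : Matrix n n ℝ) :
    Matrix n n ℝ :=
  ∫ s in (0:ℝ)..1, mexp (-(s • ζ)) * X * mexp (s • ζ)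

attribute [local instance] Matrix.frobeniusNormedRing Matrix.frobeniusNormedAlgebra

section Aux
set_option linter.unusedSectionVars false
variable {n : Type*} [Fintype n] [DecidableEq n]

lemma frobInner_self (A : Matrix n n ℝ) : frobInner A A = ∑ i, ∑ j, (A j i)^2 := by
  simp [frobInner, Matrix.trace, Matrix.diag, Matrix.mul_apply, sq]

lemma frobInner_ext {A B : Matrix n n ℝ}
    (h : ∀ X, frobInner X A = frobInner X B) : A = B := by
  have h1 : frobInner (A - B) (A - B) = 0 := by
    have h2 : frobInner (A - B) A = frobInner (A - B) B := h (A - B)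
    simp only [frobInner, Matrix.mul_sub, Matrix.trace_sub] at h2 ⊢
    linarith
  rw [frobInner_self] at h1
  have h3 : ∀ j i, A j i - B j i = 0 := by
    intro j i
    have := (Finset.sum_eq_zero_iff_of_nonneg (fun i _ => Finset.sum_nonneg
      (fun j _ => sq_nonneg ((A - B) j i)))).mp h1 i (Finset.mem_univ i)
    have := (Finset.sum_eq_zero_iff_of_nonneg
      (fun j _ => sq_nonneg ((A - B) j i))).mp this j (Finset.mem_univ j)
    simpa [sub_eq_zero, sq_eq_zero_iff, Matrix.sub_apply] using this
  ext j i
  have := h3 j i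
  linarith

lemma frobInner_conj (a b X Y : Matrix n n ℝ) :
    frobInner (a * X * b) Y = frobInner X (aᵀ * Y * bᵀ) := by
  simp only [frobInner, Matrix.transpose_mul]
  rw [Matrix.mul_assoc, Matrix.trace_mul_comm]
  simp [Matrix.mul_assoc]

lemma integral_mul_left_right (a b : Matrix n n ℝ) (f : ℝ → Matrix n n ℝ)
    (hf : Continuous f) :
    a * (∫ s in (0:ℝ)..1, f s) * b = ∫ s in (0:ℝ)..1, a * f s * b := by
  have := (LinearMap.toContinuousLinearMap
    ((LinearMap.mulRight ℝ b).comp (LinearMap.mulLeft ℝ a))).intervalIntegral_comp_comm (hf.intervalIntegrable (μ := MeasureTheory.volume) 0 1)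
  exact this.symm

lemma continuous_mexp_smul (ζ : Matrix n n ℝ) : Continuous fun s : ℝ => mexp (s • ζ) := by
  unfold mexp
  exact (NormedSpace.exp_continuous (𝔸 := Matrix n n ℝ)).comp (continuous_id.smul continuous_const)

lemma exp_smul_add (ζ : Matrix n n ℝ) (s t : ℝ) :
    mexp (s • ζ) * mexp (t • ζ) = mexp ((s + t) • ζ) := by
  unfold mexp
  rw [add_smul, Matrix.exp_add_of_commute]
  exact ((Commute.refl ζ).smul_left s).smul_right t

end Aux

section Aux2
set_option linter.unusedSectionVars false
variable {n : Type*} [Fintype n] [DecidableEq n]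

lemma Jfun_conj (g ζ Z : Matrix n n ℝ) (hg : IsUnit g) :
    (g * mexp ζ) * Jfun ζ Z * (g * mexp ζ)⁻¹ =
    Jfun (-(g * ζ * g⁻¹)) (g * Z * g⁻¹) := by
  have hgd : IsUnit g.det := (Matrix.isUnit_iff_isUnit_det g).mp hg
  have hgi : g * g⁻¹ = 1 := Matrix.mul_nonsing_inv g hgd
  have hig : g⁻¹ * g = 1 := Matrix.nonsing_inv_mul g hgd
  have hig' : ∀ W : Matrix n n ℝ, g⁻¹ * (g * W) = W := fun W => by
    rw [← Matrix.mul_assoc, hig, Matrix.one_mul]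
  have hinv : (g * mexp ζ)⁻¹ = mexp (-ζ) * g⁻¹ := by
    rw [Matrix.mul_inv_rev]
    congr 1
    unfold mexp
    exact (Matrix.exp_neg ζ).symm
  have hc1 : Continuous fun s : ℝ => mexp (-(s • ζ)) := by
    simp only [← neg_smul]
    exact (continuous_mexp_smul ζ).comp continuous_neg
  have hf : Continuous (fun s : ℝ => mexp (-(s • ζ)) * Z * mexp (s • ζ)) :=
    ((hc1.mul continuous_const).mul (continuous_mexp_smul ζ))
  set F : ℝ → Matrix n n ℝ := fun t => g * (mexp (t • ζ) * Z * mexp (-(t • ζ))) * g⁻¹ with hF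
  have key : ∀ s : ℝ, (g * mexp ζ) * (mexp (-(s • ζ)) * Z * mexp (s • ζ)) *
      (mexp (-ζ) * g⁻¹) = F (1 - s) := by
    intro s
    have e1 : mexp ζ * mexp (-(s • ζ)) = mexp ((1 - s) • ζ) := by
      rw [show -(s • ζ) = (-s) • ζ from (neg_smul s ζ).symm,
          show mexp ζ = mexp ((1:ℝ) • ζ) from by rw [one_smul],
          exp_smul_add, ← sub_eq_add_neg]
    have e2 : mexp (s • ζ) * mexp (-ζ) = mexp (-((1 - s) • ζ)) := by
      rw [show -ζ = ((-1:ℝ)) • ζ from by simp, exp_smul_add,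
          show (s + -1) • ζ = -((1 - s) • ζ) from by module]
    rw [hF]
    simp only
    rw [← e1, ← e2]
    simp only [Matrix.mul_assoc]
  have step4 : ∀ s : ℝ,
      mexp (-(s • -(g * ζ * g⁻¹))) * (g * Z * g⁻¹) * mexp (s • -(g * ζ * g⁻¹)) = F s := by
    intro s
    have w1 : -(s • -(g * ζ * g⁻¹)) = g * (s • ζ) * g⁻¹ := by
      rw [smul_neg, neg_neg]
      simp [Matrix.smul_mul, Matrix.mul_smul]
    have w2 : s • -(g * ζ * g⁻¹) = g * (-(s • ζ)) * g⁻¹ := by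
      rw [smul_neg]
      simp [Matrix.smul_mul, Matrix.mul_smul, Matrix.neg_mul, Matrix.mul_neg]
    rw [w1, w2]
    unfold mexp
    rw [Matrix.exp_conj g (s • ζ) hg, Matrix.exp_conj g (-(s • ζ)) hg]
    show _ = g * (NormedSpace.exp (s • ζ) * Z * NormedSpace.exp (-(s • ζ))) * g⁻¹
    simp only [Matrix.mul_assoc, hig']
  calc (g * mexp ζ) * Jfun ζ Z * (g * mexp ζ)⁻¹
      = ∫ s in (0:ℝ)..1, (g * mexp ζ) * (mexp (-(s • ζ)) * Z * mexp (s • ζ)) *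
          (mexp (-ζ) * g⁻¹) := by
        rw [Jfun, hinv]
        exact integral_mul_left_right _ _ _ hf
    _ = ∫ s in (0:ℝ)..1, F (1 - s) := by
        exact intervalIntegral.integral_congr fun s _ => key s
    _ = ∫ s in (0:ℝ)..1, F s := by
        rw [intervalIntegral.integral_comp_sub_left (a := (0:ℝ)) (b := 1) F 1]
        norm_num
    _ = Jfun (-(g * ζ * g⁻¹)) (g * Z * g⁻¹) := by
        rw [Jfun]
        exact intervalIntegral.integral_congr fun s _ => (step4 s).symm

end Aux2

theorem lekf_update_equivalence
    {n : Type*} [Fintype n] [DecidableEq n] {m : ℕ}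
    -- the state estimate
    (g : Matrix n n ℝ) (hg : IsUnit g)
    -- the operators P, C, R
    (P : Matrix n n ℝ →ₗ[ℝ] Matrix n n ℝ)
    (C : Matrix n n ℝ →ₗ[ℝ] (Fin m → ℝ))
    (R : (Fin m → ℝ) →ₗ[ℝ] (Fin m → ℝ))
    -- the adjoint of C
    (Cadj : (Fin m → ℝ) →ₗ[ℝ] Matrix n n ℝ)
    (hCadj : ∀ X y, eInner (C X) y = frobInner X (Cadj y))
    -- the adjoint of Ad_g
    (AdgAdj : Matrix n n ℝ →ₗ[ℝ] Matrix n n ℝ)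
    (hAdgAdj : ∀ X Y, frobInner (AdL g X) Y = frobInner X (AdgAdj Y))
    -- T := C ∘ P ∘ C† + R, assumed invertible
    (T : (Fin m → ℝ) →ₗ[ℝ] (Fin m → ℝ)) (hT : T = C ∘ₗ P ∘ₗ Cadj + R)
    (hTunit : IsUnit T)
    -- K := P ∘ C† ∘ T⁻¹ and ζ := K e
    (K : (Fin m → ℝ) →ₗ[ℝ] Matrix n n ℝ) (hK : K = P ∘ₗ Cadj ∘ₗ Ring.inverse T)
    (e : Fin m → ℝ) (ζ : Matrix n n ℝ) (hζ : ζ = K e)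
    -- barred quantities: P̄ := Ad_g ∘ P ∘ Ad_g†, C̄ := C ∘ Ad_{g⁻¹}
    (Pb : Matrix n n ℝ →ₗ[ℝ] Matrix n n ℝ) (hPb : Pb = AdL g ∘ₗ P ∘ₗ AdgAdj)
    (Cb : Matrix n n ℝ →ₗ[ℝ] (Fin m → ℝ)) (hCb : Cb = C ∘ₗ AdL g⁻¹)
    -- the adjoint of C̄
    (CbAdj : (Fin m → ℝ) →ₗ[ℝ] Matrix n n ℝ)
    (hCbAdj : ∀ X y, eInner (Cb X) y = frobInner X (CbAdj y))
    -- T̄ := C̄ ∘ P̄ ∘ C̄† + R, K̄ := P̄ ∘ C̄† ∘ T̄⁻¹, ζ̄ := K̄ e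
    (Tb : (Fin m → ℝ) →ₗ[ℝ] (Fin m → ℝ)) (hTb : Tb = Cb ∘ₗ Pb ∘ₗ CbAdj + R)
    (Kb : (Fin m → ℝ) →ₗ[ℝ] Matrix n n ℝ) (hKb : Kb = Pb ∘ₗ CbAdj ∘ₗ Ring.inverse Tb)
    (ζb : Matrix n n ℝ) (hζb : ζb = Kb e)
    -- the adjoints of J_ζ, J̄_{ζ̄} = J_{−ζ̄}, and Ad_{g·exp(ζ)}
    (JAdj : Matrix n n ℝ → Matrix n n ℝ)
    (hJAdj : ∀ X Y, frobInner (Jfun ζ X) Y = frobInner X (JAdj Y))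
    (JbAdj : Matrix n n ℝ → Matrix n n ℝ)
    (hJbAdj : ∀ X Y, frobInner (Jfun (-ζb) X) Y = frobInner X (JbAdj Y))
    (AdgEAdj : Matrix n n ℝ → Matrix n n ℝ)
    (hAdgEAdj : ∀ X Y,
      frobInner ((g * mexp ζ) * X * (g * mexp ζ)⁻¹) Y = frobInner X (AdgEAdj Y)) :
    -- (i) T̄ = T, in particular T̄ is invertible
    (Tb = T ∧ IsUnit Tb) ∧
    -- (ii) K̄ = Ad_g ∘ K, so ζ̄ = g ζ g⁻¹
    (Kb = AdL g ∘ₗ K ∧ ζb = g * ζ * g⁻¹) ∧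
    -- (iii) g·exp(ζ) = exp(ζ̄)·g
    g * mexp ζ = mexp ζb * g ∧
    -- (iv) Ad_{g·exp(ζ)} ∘ (J_ζ ∘ (id − K∘C) ∘ P ∘ J_ζ†) ∘ Ad_{g·exp(ζ)}†
    --        = J̄_{ζ̄} ∘ (id − K̄∘C̄) ∘ P̄ ∘ J̄_{ζ̄}†
    (∀ X, (g * mexp ζ) *
        Jfun ζ (P (JAdj (AdgEAdj X)) - K (C (P (JAdj (AdgEAdj X))))) *
        (g * mexp ζ)⁻¹
      = Jfun (-ζb) (Pb (JbAdj X) - Kb (Cb (Pb (JbAdj X))))) := by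
  have hgd : IsUnit g.det := (Matrix.isUnit_iff_isUnit_det g).mp hg
  have hgi : g * g⁻¹ = 1 := Matrix.mul_nonsing_inv g hgd
  have hig : g⁻¹ * g = 1 := Matrix.nonsing_inv_mul g hgd
  have hinvinv : g⁻¹⁻¹ = g := Matrix.nonsing_inv_nonsing_inv g hgd
  have ht1 : gᵀ * (g⁻¹)ᵀ = 1 := by rw [← Matrix.transpose_mul, hig, Matrix.transpose_one]
  have ht2 : (g⁻¹)ᵀ * gᵀ = 1 := by rw [← Matrix.transpose_mul, hgi, Matrix.transpose_one]
  have hig' : ∀ W : Matrix n n ℝ, g⁻¹ * (g * W) = W := fun W => by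
    rw [← Matrix.mul_assoc, hig, Matrix.one_mul]
  have hgi' : ∀ W : Matrix n n ℝ, g * (g⁻¹ * W) = W := fun W => by
    rw [← Matrix.mul_assoc, hgi, Matrix.one_mul]
  have ht1' : ∀ W : Matrix n n ℝ, gᵀ * ((g⁻¹)ᵀ * W) = W := fun W => by
    rw [← Matrix.mul_assoc, ht1, Matrix.one_mul]
  have ht2' : ∀ W : Matrix n n ℝ, (g⁻¹)ᵀ * (gᵀ * W) = W := fun W => by
    rw [← Matrix.mul_assoc, ht2, Matrix.one_mul]
  have hAdL : ∀ (u : Matrix n n ℝ) (X : Matrix n n ℝ), AdL u X = u * X * u⁻¹ :=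
    fun u X => rfl
  -- explicit adjoints
  have hAdgAdj' : ∀ Y, AdgAdj Y = gᵀ * Y * (g⁻¹)ᵀ := by
    intro Y
    apply frobInner_ext
    intro X
    rw [← hAdgAdj X Y, hAdL, frobInner_conj]
  have hCbAdj' : ∀ y, CbAdj y = (g⁻¹)ᵀ * Cadj y * gᵀ := by
    intro y
    apply frobInner_ext
    intro X
    rw [← hCbAdj X y, hCb]
    simp only [LinearMap.comp_apply]
    rw [hAdL, hinvinv, hCadj, frobInner_conj]
  have hAdgCb : ∀ y, AdgAdj (CbAdj y) = Cadj y := by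
    intro y
    rw [hCbAdj' y, hAdgAdj']
    simp only [Matrix.mul_assoc, ht1', ht2', ht1, ht2, Matrix.mul_one]
  -- (i)
  have hTbT : Tb = T := by
    rw [hTb, hT]
    congr 1
    apply LinearMap.ext
    intro y
    simp only [LinearMap.comp_apply]
    rw [hPb, hCb]
    simp only [LinearMap.comp_apply]
    rw [hAdgCb, hAdL, hAdL, hinvinv]
    congr 1
    simp only [Matrix.mul_assoc, hig', hgi', hig, hgi, Matrix.mul_one]
  have hTbUnit : IsUnit Tb := hTbT ▸ hTunit
  -- (ii)
  have hKbK : Kb = AdL g ∘ₗ K := by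
    rw [hKb, hK, hTbT]
    apply LinearMap.ext
    intro y
    simp only [LinearMap.comp_apply]
    rw [hPb]
    simp only [LinearMap.comp_apply]
    rw [hAdgCb]
  have hζbv : ζb = g * ζ * g⁻¹ := by
    rw [hζb, hKbK]
    simp only [LinearMap.comp_apply]
    rw [hAdL, ← hζ]
  -- (iii)
  have hcomm : g * mexp ζ = mexp ζb * g := by
    rw [hζbv]
    unfold mexp
    rw [Matrix.exp_conj g ζ hg, Matrix.mul_assoc (g * NormedSpace.exp ζ) g⁻¹ g, hig,
      Matrix.mul_one]
  refine ⟨⟨hTbT, hTbUnit⟩, ⟨hKbK, hζbv⟩, hcomm, ?_⟩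
  -- (iv)
  intro X
  have hAdgE' : ∀ Y, AdgEAdj Y = (g * mexp ζ)ᵀ * Y * ((g * mexp ζ)⁻¹)ᵀ := by
    intro Y
    apply frobInner_ext
    intro X'
    rw [← hAdgEAdj X' Y, frobInner_conj]
  have hJc : ∀ Z, (g * mexp ζ) * Jfun ζ Z * (g * mexp ζ)⁻¹ = Jfun (-ζb) (g * Z * g⁻¹) := by
    intro Z
    rw [hζbv]
    exact Jfun_conj g ζ Z hg
  have hJbAdj' : ∀ Y, JbAdj Y = (g⁻¹)ᵀ * JAdj (AdgEAdj Y) * gᵀ := by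
    intro Y
    apply frobInner_ext
    intro X'
    rw [← hJbAdj X' Y]
    have hX' : Jfun (-ζb) X' =
        (g * mexp ζ) * Jfun ζ (g⁻¹ * X' * g) * (g * mexp ζ)⁻¹ := by
      rw [hJc (g⁻¹ * X' * g)]
      simp only [Matrix.mul_assoc, hgi', hig', hgi, hig, Matrix.mul_one]
    calc frobInner (Jfun (-ζb) X') Y
        = frobInner ((g * mexp ζ) * Jfun ζ (g⁻¹ * X' * g) * (g * mexp ζ)⁻¹) Y := by
          rw [hX']
      _ = frobInner (Jfun ζ (g⁻¹ * X' * g))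
            ((g * mexp ζ)ᵀ * Y * ((g * mexp ζ)⁻¹)ᵀ) := frobInner_conj _ _ _ _
      _ = frobInner (g⁻¹ * X' * g)
            (JAdj ((g * mexp ζ)ᵀ * Y * ((g * mexp ζ)⁻¹)ᵀ)) := hJAdj _ _
      _ = frobInner X'
            ((g⁻¹)ᵀ * JAdj ((g * mexp ζ)ᵀ * Y * ((g * mexp ζ)⁻¹)ᵀ) * gᵀ) :=
          frobInner_conj _ _ _ _
      _ = frobInner X' ((g⁻¹)ᵀ * JAdj (AdgEAdj Y) * gᵀ) := by rw [hAdgE' Y]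
  set W := JAdj (AdgEAdj X) with hWdef
  have hPbJb : Pb (JbAdj X) = g * P W * g⁻¹ := by
    rw [hPb]
    simp only [LinearMap.comp_apply]
    rw [hJbAdj' X, hAdgAdj']
    have hcancel : gᵀ * ((g⁻¹)ᵀ * JAdj (AdgEAdj X) * gᵀ) * (g⁻¹)ᵀ = W := by
      rw [← hWdef]
      simp only [Matrix.mul_assoc, ht1', ht2', ht1, ht2, Matrix.mul_one]
    rw [hcancel, hAdL]
  have hCbPb : Cb (Pb (JbAdj X)) = C (P W) := by
    rw [hCb]
    simp only [LinearMap.comp_apply]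
    rw [hPbJb, hAdL, hinvinv]
    congr 1
    simp only [Matrix.mul_assoc, hig', hgi', hig, hgi, Matrix.mul_one]
  have hArg : Pb (JbAdj X) - Kb (Cb (Pb (JbAdj X)))
      = g * (P W - K (C (P W))) * g⁻¹ := by
    rw [hCbPb, hPbJb, hKbK]
    simp only [LinearMap.comp_apply]
    rw [hAdL, Matrix.mul_sub, Matrix.sub_mul]
  rw [hArg, ← hJc]
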